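/- Let R be a commutative ring in which every finitely generated semi-regular ideal is flat. Then every submodule of a semi-regular flat R-module is semi-regular flat. -/

import Mathlib

open CategoryTheory

noncomputable section

namespace SemiregAux

open TensorProduct LinearMap

variable {R : Type} [CommRing R]

/-- The multiplication map `I ⊗ Y → Y`. -/
def mu (I : Ideal R) (Y : Type) [AddCommGroup Y] [Module R Y] : I ⊗[R] Y →ₗ[R] Y :=
  TensorProduct.lift ((LinearMap.lsmul R Y).comp I.subtype)

@[simp] lemma mu_tmul (I : Ideal R) {Y : Type} [AddCommGroup Y] [Module R Y] (i : I) (y : Y) :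
    mu I Y (i ⊗ₜ y) = (i : R) • y := rfl

/-- The map `Y → (R/I) ⊗ Y`. -/
def qmap (I : Ideal R) (Y : Type) [AddCommGroup Y] [Module R Y] : Y →ₗ[R] (R ⧸ I) ⊗[R] Y :=
  TensorProduct.mk R (R ⧸ I) Y 1

@[simp] lemma qmap_apply (I : Ideal R) {Y : Type} [AddCommGroup Y] [Module R Y] (y : Y) :
    qmap I Y y = (1 : R ⧸ I) ⊗ₜ y := rfl

variable (I : Ideal R) {Y Z : Type} [AddCommGroup Y] [Module R Y] [AddCommGroup Z] [Module R Z]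

lemma mu_natural (f : Y →ₗ[R] Z) :
    f ∘ₗ mu I Y = mu I Z ∘ₗ lTensor I f := by
  apply TensorProduct.ext'
  intro i y
  simp [map_smul]

lemma qmap_natural (f : Y →ₗ[R] Z) :
    lTensor (R ⧸ I) f ∘ₗ qmap I Y = qmap I Z ∘ₗ f := by
  ext y
  simp

lemma mu_eq : mu I Y = (TensorProduct.lid R Y).toLinearMap ∘ₗ rTensor Y I.subtype := by
  apply TensorProduct.ext'
  intro i y
  simp

lemma qmap_eq :
    qmap I Y = rTensor Y I.mkQ ∘ₗ (TensorProduct.lid R Y).symm.toLinearMap := by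
  apply LinearMap.ext
  intro y
  show (1 : R ⧸ I) ⊗ₜ[R] y = rTensor Y I.mkQ ((TensorProduct.lid R Y).symm y)
  rw [TensorProduct.lid_symm_apply, rTensor_tmul]
  rfl

lemma exact_mu_qmap : Function.Exact (mu I Y) (qmap I Y) := by
  rw [mu_eq, qmap_eq]
  exact (LinearEquiv.conj_exact_iff_exact _ _ (TensorProduct.lid R Y)).mpr
    (rTensor_exact Y (LinearMap.exact_subtype_mkQ I) (Submodule.mkQ_surjective I))

lemma surjective_qmap : Function.Surjective (qmap I Y) := by
  rw [qmap_eq, LinearMap.coe_comp]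
  exact Function.Surjective.comp
    (LinearMap.rTensor_surjective (g := I.mkQ) Y (Submodule.mkQ_surjective I))
    (TensorProduct.lid R Y).symm.surjective

/-- The homological core: for `A ⊗ -` applied to the start of a resolution
`P₂ → P₁ → P₀ → X`, exactness at `1` is equivalent to injectivity of
`A ⊗ K → A ⊗ P₀`, where `K = ker (P₀ → X)`. -/
lemma exact_lTensor_iff_injective (A : Type) [AddCommGroup A] [Module R A]
    {P₂ P₁ P₀ X : Type} [AddCommGroup P₂] [Module R P₂] [AddCommGroup P₁] [Module R P₁]
    [AddCommGroup P₀] [Module R P₀] [AddCommGroup X] [Module R X]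
    (d₂ : P₂ →ₗ[R] P₁) (d₁ : P₁ →ₗ[R] P₀) (π : P₀ →ₗ[R] X)
    (e21 : Function.Exact d₂ d₁) (e10 : Function.Exact d₁ π) :
    Function.Exact (lTensor A d₂) (lTensor A d₁) ↔
      Function.Injective (lTensor A (ker π).subtype) := by
  have hd₁mem : ∀ x, d₁ x ∈ ker π := fun x => by
    rw [mem_ker]; exact e10.apply_apply_eq_zero x
  set π' : P₁ →ₗ[R] (ker π) := d₁.codRestrict (ker π) hd₁mem with hπ'def
  have hfact : (ker π).subtype ∘ₗ π' = d₁ := LinearMap.subtype_comp_codRestrict _ _ _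
  have hπ'surj : Function.Surjective π' := by
    rintro ⟨k, hk⟩
    obtain ⟨x, hx⟩ := (e10 k).mp (mem_ker.mp hk)
    exact ⟨x, Subtype.ext hx⟩
  have hlt : lTensor A d₁ = lTensor A (ker π).subtype ∘ₗ lTensor A π' := by
    rw [← lTensor_comp, hfact]
  have hd₂mem : ∀ x, d₂ x ∈ ker d₁ := fun x => by
    rw [mem_ker]; exact e21.apply_apply_eq_zero x
  set d₂' : P₂ →ₗ[R] (ker d₁) := d₂.codRestrict (ker d₁) hd₂mem with hd₂'def
  have hfact2 : (ker d₁).subtype ∘ₗ d₂' = d₂ := LinearMap.subtype_comp_codRestrict _ _ _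
  have hd₂'surj : Function.Surjective d₂' := by
    rintro ⟨k, hk⟩
    obtain ⟨x, hx⟩ := (e21 k).mp (mem_ker.mp hk)
    exact ⟨x, Subtype.ext hx⟩
  constructor
  · intro hexact
    rw [injective_iff_map_eq_zero]
    intro t ht
    obtain ⟨s, rfl⟩ := lTensor_surjective A hπ'surj t
    have hs : lTensor A d₁ s = 0 := by
      rw [hlt]
      simpa using ht
    obtain ⟨u, rfl⟩ := (hexact s).mp hs
    have hcomp : π' ∘ₗ d₂ = 0 := by
      apply LinearMap.ext
      intro x
      apply Subtype.ext
      simpa [hπ'def, LinearMap.codRestrict_apply] using e21.apply_apply_eq_zero x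
    calc lTensor A π' (lTensor A d₂ u) = lTensor A (π' ∘ₗ d₂) u := by
          rw [lTensor_comp]; rfl
      _ = 0 := by rw [hcomp, lTensor_zero]; rfl
  · intro hinj
    intro s
    constructor
    · intro h0
      have hπ's : lTensor A π' s = 0 := by
        apply hinj
        rw [map_zero, ← LinearMap.comp_apply, ← hlt]
        exact h0
      have ebase : Function.Exact ((ker d₁).subtype : (ker d₁) →ₗ[R] P₁) π' := by
        intro x
        constructor
        · intro hx
          have hx' : d₁ x = 0 := by
            rw [← hfact, LinearMap.comp_apply, hx, map_zero]
          exact ⟨⟨x, hx'⟩, rfl⟩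
        · rintro ⟨⟨v, hv⟩, rfl⟩
          apply Subtype.ext
          show ((ker π).subtype) (π' v) = 0
          rw [← LinearMap.comp_apply, hfact]
          exact hv
      have hex := lTensor_exact (Q := A) ebase hπ'surj
      obtain ⟨v, rfl⟩ := (hex s).mp hπ's
      obtain ⟨u, rfl⟩ := lTensor_surjective A hd₂'surj v
      refine ⟨u, ?_⟩
      rw [← hfact2, lTensor_comp]
      rfl
    · rintro ⟨u, rfl⟩
      have hz : d₁ ∘ₗ d₂ = 0 := by
        apply LinearMap.ext
        intro x
        exact e21.apply_apply_eq_zero x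
      calc lTensor A d₁ (lTensor A d₂ u) = lTensor A (d₁ ∘ₗ d₂) u := by
            rw [lTensor_comp]; rfl
        _ = 0 := by rw [hz, lTensor_zero]; rfl

/-- The arithmetic core: for a surjection `π : P₀ → X` with `P₀` flat,
injectivity of `(R/I) ⊗ ker π → (R/I) ⊗ P₀` is equivalent to injectivity of
the multiplication map `I ⊗ X → X`. -/
lemma injective_lTensor_iff_injective_mu
    {P₀ X : Type} [AddCommGroup P₀] [Module R P₀] [AddCommGroup X] [Module R X]
    (π : P₀ →ₗ[R] X) (hπ : Function.Surjective π) [Module.Flat R P₀] :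
    Function.Injective (lTensor (R ⧸ I) (ker π).subtype) ↔
      Function.Injective (mu I X) := by
  have hmuP : Function.Injective (mu I P₀) := by
    rw [mu_eq, LinearMap.coe_comp]
    exact (TensorProduct.lid R P₀).injective.comp
      (Module.Flat.rTensor_preserves_injective_linearMap I.subtype
        (Submodule.injective_subtype I))
  constructor
  · intro hinj
    rw [injective_iff_map_eq_zero]
    intro t ht
    obtain ⟨s, rfl⟩ := lTensor_surjective I hπ t
    have hp : π (mu I P₀ s) = 0 := by
      rw [← LinearMap.comp_apply, mu_natural I π, LinearMap.comp_apply, ht]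
    set k : ker π := ⟨mu I P₀ s, mem_ker.mpr hp⟩ with hk
    have hq : lTensor (R ⧸ I) (ker π).subtype (qmap I (ker π) k) = 0 := by
      rw [← LinearMap.comp_apply, qmap_natural I (ker π).subtype, LinearMap.comp_apply]
      exact (exact_mu_qmap I).apply_apply_eq_zero s
    have hq0 : qmap I (ker π) k = 0 := by
      apply hinj
      rw [map_zero]; exact hq
    obtain ⟨w, hw⟩ := ((exact_mu_qmap I k).mp hq0)
    have hsw : lTensor I (ker π).subtype w = s := by
      apply hmuP
      rw [← LinearMap.comp_apply, ← mu_natural I (ker π).subtype, LinearMap.comp_apply, hw]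
      rfl
    rw [← hsw, ← LinearMap.comp_apply, ← lTensor_comp]
    have hz : π ∘ₗ (ker π).subtype = 0 := by
      apply LinearMap.ext
      intro x
      exact x.2
    rw [hz, lTensor_zero]
    rfl
  · intro hinj
    rw [injective_iff_map_eq_zero]
    intro t ht
    obtain ⟨k, rfl⟩ := surjective_qmap I t
    have hq : qmap I P₀ ((ker π).subtype k) = 0 := by
      rw [← LinearMap.comp_apply, ← qmap_natural I (ker π).subtype, LinearMap.comp_apply, ht]
    obtain ⟨s, hs⟩ := ((exact_mu_qmap I _).mp hq)
    have hπs : lTensor I π s = 0 := by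
      apply hinj
      rw [map_zero, ← LinearMap.comp_apply, ← mu_natural I π, LinearMap.comp_apply, hs]
      exact k.2
    have hex := lTensor_exact (Q := ↥I) (LinearMap.exact_subtype_ker_map π) hπ
    obtain ⟨w, rfl⟩ := (hex s).mp hπs
    have hkw : mu I (ker π) w = k := by
      apply Submodule.injective_subtype (ker π)
      rw [← hs, ← LinearMap.comp_apply, mu_natural I (ker π).subtype]
      rfl
    rw [← hkw]
    exact (exact_mu_qmap I).apply_apply_eq_zero w

/-- `Tor₁(R/I, X)` vanishes iff the multiplication map `I ⊗ X → X` is injective. -/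
lemma tor_isZero_iff (I : Ideal R) (X : Type) [AddCommGroup X] [Module R X] :
    Limits.IsZero (((Tor (ModuleCat R) 1).obj (ModuleCat.of R (R ⧸ I))).obj
      (ModuleCat.of R X)) ↔ Function.Injective (mu I X) := by
  set A : ModuleCat R := ModuleCat.of R (R ⧸ I) with hA
  set F := (MonoidalCategory.tensoringLeft (ModuleCat R)).obj A with hF
  set P := ProjectiveResolution.of (ModuleCat.of R X) with hP
  have e : (((Tor (ModuleCat R) 1).obj A).obj (ModuleCat.of R X)) ≅
      ((F.mapHomologicalComplex (ComplexShape.down ℕ)).obj P.complex).homology 1 :=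
    P.isoLeftDerivedObj F 1
  have h1 : Limits.IsZero (((Tor (ModuleCat R) 1).obj A).obj (ModuleCat.of R X)) ↔
      Limits.IsZero
        (((F.mapHomologicalComplex (ComplexShape.down ℕ)).obj P.complex).homology 1) :=
    ⟨fun h => h.of_iso e.symm, fun h => h.of_iso e⟩
  rw [h1, ← HomologicalComplex.exactAt_iff_isZero_homology,
    HomologicalComplex.exactAt_iff' _ 2 1 0 (by simp) (by simp),
    ShortComplex.ShortExact.moduleCat_exact_iff_function_exact]
  have e21 : Function.Exact (P.complex.d 2 1) (P.complex.d 1 0) :=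
    (ShortComplex.ShortExact.moduleCat_exact_iff_function_exact _).mp (P.exact_succ 0)
  have e10 : Function.Exact (P.complex.d 1 0) (P.π.f 0) :=
    (ShortComplex.ShortExact.moduleCat_exact_iff_function_exact _).mp
      (ShortComplex.exact_of_g_is_cokernel
        (ShortComplex.mk (P.complex.d 1 0) (P.π.f 0) P.complex_d_comp_π_f_zero)
        P.isColimitCokernelCofork)
  have hπsurj : Function.Surjective (P.π.f 0) :=
    (ModuleCat.epi_iff_surjective _).mp inferInstance
  haveI : Module.Projective R (P.complex.X 0) := by
    rw [IsProjective.iff_projective]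
    exact P.projective 0
  haveI flat0 : Module.Flat R (P.complex.X 0) := Module.Flat.of_projective
  exact Iff.trans
    (exact_lTensor_iff_injective (R ⧸ I) (P.complex.d 2 1).hom (P.complex.d 1 0).hom (P.π.f 0).hom e21 e10)
    (injective_lTensor_iff_injective_mu I (P.π.f 0).hom hπsurj)

end SemiregAux

/-- An ideal is semi-regular if it contains a finitely generated subideal
with zero annihilator. -/
def Ideal.IsSemiregular {R : Type} [CommRing R] (I : Ideal R) : Prop :=
  ∃ J : Ideal R, J ≤ I ∧ J.FG ∧ Submodule.annihilator J = ⊥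

/-- A module is semi-regular flat if `Tor₁(R/I, M) = 0` for every finitely generated
semi-regular ideal `I`. -/
def IsSemiregularFlat (R : Type) [CommRing R] (M : Type) [AddCommGroup M] [Module R M] : Prop :=
  ∀ I : Ideal R, I.FG → I.IsSemiregular →
    Limits.IsZero (((Tor (ModuleCat R) 1).obj (ModuleCat.of R (R ⧸ I))).obj (ModuleCat.of R M))

/-- If every finitely generated semi-regular ideal of `R` is flat, then every
submodule of a semi-regular flat module is semi-regular flat. -/
theorem isSemiregularFlat_submodule (R : Type) [CommRing R]
    (h : ∀ I : Ideal R, I.FG → I.IsSemiregular → Module.Flat R I)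
    (M : Type) [AddCommGroup M] [Module R M] (hM : IsSemiregularFlat R M)
    (N : Submodule R M) :
    IsSemiregularFlat R N := by
  intro I hfg hsr
  rw [SemiregAux.tor_isZero_iff]
  have hMinj : Function.Injective (SemiregAux.mu I M) :=
    (SemiregAux.tor_isZero_iff I M).mp (hM I hfg hsr)
  haveI hflat : Module.Flat R I := h I hfg hsr
  have hNinj : Function.Injective (LinearMap.lTensor I N.subtype) :=
    Module.Flat.lTensor_preserves_injective_linearMap N.subtype
      (Submodule.injective_subtype N)
  have hnat : N.subtype ∘ₗ SemiregAux.mu I N =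
      SemiregAux.mu I M ∘ₗ LinearMap.lTensor I N.subtype :=
    SemiregAux.mu_natural I N.subtype
  have hcomp : Function.Injective (N.subtype ∘ₗ SemiregAux.mu I N) := by
    rw [hnat, LinearMap.coe_comp]
    exact hMinj.comp hNinj
  rw [LinearMap.coe_comp] at hcomp
  exact (Function.Injective.of_comp_iff (Submodule.injective_subtype N)
    (SemiregAux.mu I N)).mp hcomp

end
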